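/- Let K₀ > 0 and T ∈ (0, ∞]. Let f : [0, T) → ℝ be twice differentiable with f(0) = 0, f'(0) = 1, and suppose f(r) ≥ 0 and f''(r) + K₀·f(r) ≥ 0 for all r ∈ [0, T). Then for every r ∈ [0, T) with r ≤ π/(2·√K₀), one has sin(√K₀·r)·f'(r) − √K₀·cos(√K₀·r)·f(r) ≥ 0. -/

import Mathlib

theorem jacobi_field_differential_inequality
    (K₀ : ℝ) (hK₀ : 0 < K₀) (T : EReal) (hT : 0 < T)
    (f f' f'' : ℝ → ℝ)
    (D : Set ℝ) (hD : D = {r : ℝ | 0 ≤ r ∧ (r : EReal) < T})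
    (hf0 : f 0 = 0) (hf'0 : f' 0 = 1)
    (hderiv1 : ∀ r ∈ D, HasDerivWithinAt f (f' r) D r)
    (hderiv2 : ∀ r ∈ D, HasDerivWithinAt f' (f'' r) D r)
    (hfnonneg : ∀ r ∈ D, 0 ≤ f r)
    (hineq : ∀ r ∈ D, 0 ≤ f'' r + K₀ * f r) :
    ∀ r ∈ D, r ≤ Real.pi / (2 * Real.sqrt K₀) →
      0 ≤ Real.sin (Real.sqrt K₀ * r) * f' r
        - Real.sqrt K₀ * Real.cos (Real.sqrt K₀ * r) * f r := by
  intro r hr hrle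
  set s := Real.sqrt K₀ with hs
  have hs0 : 0 < s := Real.sqrt_pos.mpr hK₀
  have hsub : Set.Icc (0:ℝ) r ⊆ D := by
    rw [hD]
    rintro x ⟨hx0, hxr⟩
    refine ⟨hx0, lt_of_le_of_lt ?_ ((hD ▸ hr).2)⟩
    exact_mod_cast hxr
  set W : ℝ → ℝ := fun x => Real.sin (s * x) * f' x - s * Real.cos (s * x) * f x with hW
  -- derivative of W within D
  have hWd : ∀ x ∈ D, HasDerivWithinAt W (Real.sin (s * x) * (f'' x + K₀ * f x)) D x := by
    intro x hx
    have h1 : HasDerivWithinAt (fun y => Real.sin (s * y)) (Real.cos (s * x) * s) D x := by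
      have h := ((Real.hasDerivAt_sin (s * x)).comp x
        ((hasDerivAt_id x).const_mul s)).hasDerivWithinAt (s := D)
      simp only [mul_one] at h
      exact h
    have h2 : HasDerivWithinAt (fun y => Real.cos (s * y)) (-Real.sin (s * x) * s) D x := by
      have h := ((Real.hasDerivAt_cos (s * x)).comp x
        ((hasDerivAt_id x).const_mul s)).hasDerivWithinAt (s := D)
      simp only [mul_one] at h
      exact h
    have := (h1.mul (hderiv2 x hx)).sub
      (((h2.const_mul s).mul (hderiv1 x hx)))
    refine this.congr_deriv ?_
    have hsq : s ^ 2 = K₀ := Real.sq_sqrt hK₀.le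
    linear_combination (Real.sin (s * x) * f x) * hsq
  have hmono : MonotoneOn W (Set.Icc 0 r) := by
    apply monotoneOn_of_hasDerivWithinAt_nonneg (convex_Icc 0 r)
      (f' := fun x => Real.sin (s * x) * (f'' x + K₀ * f x))
    · intro x hx
      exact ((hWd x (hsub hx)).mono hsub).continuousWithinAt
    · intro x hx
      have hx' : x ∈ Set.Icc (0:ℝ) r := interior_subset hx
      exact ((hWd x (hsub hx')).mono (interior_subset.trans hsub))
    · intro x hx
      rw [interior_Icc] at hx
      have hxD : x ∈ D := hsub ⟨hx.1.le, hx.2.le⟩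
      have hsin : 0 ≤ Real.sin (s * x) := by
        apply Real.sin_nonneg_of_nonneg_of_le_pi
        · exact mul_nonneg hs0.le hx.1.le
        · have : x ≤ Real.pi / (2 * s) := le_trans hx.2.le hrle
          have := mul_le_mul_of_nonneg_left this hs0.le
          calc s * x ≤ s * (Real.pi / (2 * s)) := this
            _ = Real.pi / 2 := by field_simp
            _ ≤ Real.pi := by linarith [Real.pi_pos]
      exact mul_nonneg hsin (hineq x hxD)
  have h0 : (0:ℝ) ∈ Set.Icc (0:ℝ) r := ⟨le_refl 0, (hD ▸ hr).1⟩
  have hrmem : r ∈ Set.Icc (0:ℝ) r := ⟨(hD ▸ hr).1, le_refl r⟩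
  have := hmono h0 hrmem (hD ▸ hr).1
  have hW0 : W 0 = 0 := by simp [hW, hf0]
  rw [hW0] at this
  simpa [hW] using this
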